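/- Let (y^k, z^k, x^k)_{k≥0} be an sPADMM sequence with τ > 0, and assume T^{-1}(0) is nonempty. Then (τβ)^{-1}‖x^1 − x^0‖² ≤ dist²_{H₃}(w^0, T^{-1}(0)), where H₃ := 4τ·Diag(30(S + Σ_{ϑf} + 5βAA*), 2(T₀ + Σ_{φg} + 57βBB*), 112β^{-1}I). -/

import Mathlib

open scoped RealInnerProductSpace

noncomputable section

/-- The subdifferential of a function `f : Y → ℝ ∪ {+∞}` (encoded with values in `EReal`). -/
def subdiff {Y : Type*} [NormedAddCommGroup Y] [InnerProductSpace ℝ Y]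
    (f : Y → EReal) (y : Y) : Set Y :=
  {ξ | ∀ y', f y + ((⟪ξ, y' - y⟫ : ℝ) : EReal) ≤ f y'}

private lemma scalar_key (β ρ U rU p q w1 w2 D X2 Sa Sad Sd Ta Tad Td : ℝ)
    (hβ : 0 < β)
    (hρ : 0 ≤ ρ) (hU : 0 ≤ U) (hD : 0 ≤ D) (hX2 : 0 ≤ X2)
    (hSa : 0 ≤ Sa) (hSd : 0 ≤ Sd) (hTa : 0 ≤ Ta) (hTd : 0 ≤ Td)
    (sq1 : 0 ≤ 4*U - 4*rU + 4*w2 + ρ - 2*w1 + D)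
    (sq3 : 0 ≤ ρ - 4*w1 + 4*D)
    (sq2 : 0 ≤ β^2*ρ - 8*β*p + 16*X2)
    (sqS : 0 ≤ Sa + 2*Sad + Sd)
    (sqT : 0 ≤ Ta + 2*Tad + Td)
    (h1 : β*(ρ - 2*rU + U - w1 + w2) + Sa + Sad ≤ p - q)
    (h2 : β*rU + Ta + Tad ≤ q) :
    β*ρ ≤ 120*Sd + 8*Td + 456*β*D + 448*(β⁻¹*X2) := by
  have key : β*(β*ρ) ≤ β*(120*Sd + 8*Td + 456*β*D) + 448*X2 := by
    nlinarith [mul_nonneg hβ.le sq1, mul_nonneg hβ.le sq3, mul_nonneg hβ.le sqS,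
      mul_nonneg hβ.le sqT, mul_nonneg hβ.le (mul_nonneg hβ.le hD),
      mul_nonneg hβ.le hSd, mul_nonneg hβ.le hTd, mul_nonneg hβ.le hSa, mul_nonneg hβ.le hTa,
      mul_nonneg hβ.le (mul_nonneg hβ.le hρ), sq2]
  rw [← mul_le_mul_iff_right₀ hβ, mul_add]
  have e : β*(448*(β⁻¹*X2)) = 448*X2 := by field_simp
  rw [e]
  exact key

set_option maxHeartbeats 1000000 in
theorem sPADMM_first_step_x_bound
    {Y Z X : Type*}
    [NormedAddCommGroup Y] [InnerProductSpace ℝ Y] [FiniteDimensional ℝ Y]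
    [NormedAddCommGroup Z] [InnerProductSpace ℝ Z] [FiniteDimensional ℝ Z]
    [NormedAddCommGroup X] [InnerProductSpace ℝ X] [FiniteDimensional ℝ X]
    (ϑf : Y → EReal) (φg : Z → EReal)
    (hϑbot : ∀ v, ϑf v ≠ ⊥) (hϑproper : ∃ v, ϑf v ≠ ⊤)
    (hϑlsc : LowerSemicontinuous ϑf)
    (hϑconvex : ∀ (v v' : Y) (a b : ℝ), 0 ≤ a → 0 ≤ b → a + b = 1 →
      ϑf (a • v + b • v') ≤ (a : EReal) * ϑf v + (b : EReal) * ϑf v')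
    (hφbot : ∀ v, φg v ≠ ⊥) (hφproper : ∃ v, φg v ≠ ⊤)
    (hφlsc : LowerSemicontinuous φg)
    (hφconvex : ∀ (v v' : Z) (a b : ℝ), 0 ≤ a → 0 ≤ b → a + b = 1 →
      φg (a • v + b • v') ≤ (a : EReal) * φg v + (b : EReal) * φg v')
    (A : X →ₗ[ℝ] Y) (B : X →ₗ[ℝ] Z) (c : X)
    (β τ : ℝ) (hβ : 0 < β) (hτ : 0 < τ)
    (S : Y →ₗ[ℝ] Y) (hSsym : LinearMap.IsSymmetric S) (hSpsd : ∀ v, 0 ≤ ⟪S v, v⟫)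
    (T₀ : Z →ₗ[ℝ] Z) (hTsym : LinearMap.IsSymmetric T₀) (hTpsd : ∀ v, 0 ≤ ⟪T₀ v, v⟫)
    (SigY : Y →ₗ[ℝ] Y) (hSigYsym : LinearMap.IsSymmetric SigY)
    (hSigYpsd : ∀ v, 0 ≤ ⟪SigY v, v⟫)
    (hSigYmono : ∀ (y₁ y₂ ξ₁ ξ₂ : Y), ξ₁ ∈ subdiff ϑf y₁ → ξ₂ ∈ subdiff ϑf y₂ →
      ⟪y₁ - y₂, SigY (y₁ - y₂)⟫ ≤ ⟪ξ₁ - ξ₂, y₁ - y₂⟫)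
    (SigZ : Z →ₗ[ℝ] Z) (hSigZsym : LinearMap.IsSymmetric SigZ)
    (hSigZpsd : ∀ v, 0 ≤ ⟪SigZ v, v⟫)
    (hSigZmono : ∀ (z₁ z₂ η₁ η₂ : Z), η₁ ∈ subdiff φg z₁ → η₂ ∈ subdiff φg z₂ →
      ⟪z₁ - z₂, SigZ (z₁ - z₂)⟫ ≤ ⟪η₁ - η₂, z₁ - z₂⟫)
    (y : ℕ → Y) (z : ℕ → Z) (x : ℕ → X)
    (hADMMy : ∀ k : ℕ,
      -(A (x k)) - β • A (LinearMap.adjoint A (y (k+1)) + LinearMap.adjoint B (z k) - c)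
        - S (y (k+1) - y k) ∈ subdiff ϑf (y (k+1)))
    (hADMMz : ∀ k : ℕ,
      -(B (x k)) - β • B (LinearMap.adjoint A (y (k+1)) + LinearMap.adjoint B (z (k+1)) - c)
        - T₀ (z (k+1) - z k) ∈ subdiff φg (z (k+1)))
    (hADMMx : ∀ k : ℕ,
      x (k+1) = x k + (τ * β) • (LinearMap.adjoint A (y (k+1)) + LinearMap.adjoint B (z (k+1)) - c))
    (KKT : Y × Z × X → Prop)
    (hKKT : ∀ w : Y × Z × X, KKT w ↔
      (-(A w.2.2) ∈ subdiff ϑf w.1 ∧ -(B w.2.2) ∈ subdiff φg w.2.1 ∧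
        LinearMap.adjoint A w.1 + LinearMap.adjoint B w.2.1 = c))
    (hne : ∃ w, KKT w)
    (H3sq : Y → Z → X → ℝ)
    (hH3 : ∀ (vy : Y) (vz : Z) (vx : X), H3sq vy vz vx =
      4 * τ * (30 * (⟪vy, S vy⟫ + ⟪vy, SigY vy⟫ + 5 * β * ‖LinearMap.adjoint A vy‖ ^ 2)
        + 2 * (⟪vz, T₀ vz⟫ + ⟪vz, SigZ vz⟫ + 57 * β * ‖LinearMap.adjoint B vz‖ ^ 2)
        + 112 * β⁻¹ * ‖vx‖ ^ 2)) :
    (τ * β)⁻¹ * ‖x 1 - x 0‖ ^ 2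
      ≤ (⨅ w : {w : Y × Z × X // KKT w},
      Real.sqrt (H3sq (w.1.1 - y 0) (w.1.2.1 - z 0) (w.1.2.2 - x 0))) ^ 2 := by
  have hτβ : 0 < τ * β := mul_pos hτ hβ
  set r : X := LinearMap.adjoint A (y 1) + LinearMap.adjoint B (z 1) - c with hr
  have hstep : x 1 - x 0 = (τ * β) • r := by
    have h : x 1 = x 0 + (τ * β) • r := hADMMx 0
    rw [h]; abel
  have hL : (τ * β)⁻¹ * ‖x 1 - x 0‖ ^ 2 = τ * β * ‖r‖ ^ 2 := by
    rw [hstep, norm_smul, Real.norm_eq_abs, abs_of_pos hτβ]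
    field_simp
  -- the key per-KKT-point bound
  have key : ∀ w : Y × Z × X, KKT w →
      τ * β * ‖r‖ ^ 2 ≤ H3sq (w.1 - y 0) (w.2.1 - z 0) (w.2.2 - x 0) := by
    rintro ⟨ybar, zbar, xbar⟩ hw
    rw [hKKT] at hw
    obtain ⟨hwy, hwz, hwc⟩ := hw
    dsimp only at hwy hwz hwc ⊢
    set aa := y 1 - ybar with haa
    set bb := z 1 - zbar with hbb
    set dy := ybar - y 0 with hdy
    set dz := zbar - z 0 with hdz
    set dx := xbar - x 0 with hdx
    set uu := LinearMap.adjoint B bb with huu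
    set ee := LinearMap.adjoint B dz with hee
    have hy1 : -(A (x 0)) - β • A (LinearMap.adjoint A (y 1) + LinearMap.adjoint B (z 0) - c)
        - S (y 1 - y 0) ∈ subdiff ϑf (y 1) := hADMMy 0
    have hz1 : -(B (x 0)) - β • B (LinearMap.adjoint A (y 1) + LinearMap.adjoint B (z 1) - c)
        - T₀ (z 1 - z 0) ∈ subdiff φg (z 1) := hADMMz 0
    -- first monotonicity inequality
    have h1v : (0:ℝ) ≤ ⟪(-(A (x 0)) - β • A (LinearMap.adjoint A (y 1) + LinearMap.adjoint B (z 0) - c)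
        - S (y 1 - y 0)) - -(A xbar), y 1 - ybar⟫ := by
      have hm := hSigYmono (y 1) ybar _ _ hy1 hwy
      have hp : (0:ℝ) ≤ ⟪y 1 - ybar, SigY (y 1 - ybar)⟫ := by
        rw [real_inner_comm]; exact hSigYpsd _
      exact le_trans hp hm
    have hrw1 : (-(A (x 0)) - β • A (LinearMap.adjoint A (y 1) + LinearMap.adjoint B (z 0) - c)
        - S (y 1 - y 0)) - -(A xbar) = A (dx - β • (r - uu - ee)) - S (aa + dy) := by
      have e1 : LinearMap.adjoint A (y 1) + LinearMap.adjoint B (z 0) - c = r - uu - ee := by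
        rw [hr, huu, hee, hbb, hdz]; simp only [map_sub]; abel
      have e2 : y 1 - y 0 = aa + dy := by rw [haa, hdy]; abel
      rw [e1, e2, hdx]
      simp only [map_sub, map_smul]
      abel
    rw [hrw1] at h1v
    have e3 : LinearMap.adjoint A aa = r - uu := by
      rw [haa, hr, huu, hbb]; simp only [map_sub]; rw [← hwc]; abel
    have h1s : (0:ℝ) ≤ ⟪dx - β • (r - uu - ee), r - uu⟫ - ⟪S (aa + dy), aa⟫ := by
      rw [inner_sub_left, ← LinearMap.adjoint_inner_right, e3] at h1v
      rw [← haa] at h1v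
      linarith [h1v]
    -- second monotonicity inequality
    have h2v : (0:ℝ) ≤ ⟪(-(B (x 0)) - β • B (LinearMap.adjoint A (y 1) + LinearMap.adjoint B (z 1) - c)
        - T₀ (z 1 - z 0)) - -(B xbar), z 1 - zbar⟫ := by
      have hm := hSigZmono (z 1) zbar _ _ hz1 hwz
      have hp : (0:ℝ) ≤ ⟪z 1 - zbar, SigZ (z 1 - zbar)⟫ := by
        rw [real_inner_comm]; exact hSigZpsd _
      exact le_trans hp hm
    have hrw2 : (-(B (x 0)) - β • B (LinearMap.adjoint A (y 1) + LinearMap.adjoint B (z 1) - c)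
        - T₀ (z 1 - z 0)) - -(B xbar) = B (dx - β • r) - T₀ (bb + dz) := by
      have e2 : z 1 - z 0 = bb + dz := by rw [hbb, hdz]; abel
      rw [← hr, e2, hdx]
      simp only [map_sub, map_smul]
      abel
    rw [hrw2] at h2v
    have h2s : (0:ℝ) ≤ ⟪dx - β • r, uu⟫ - ⟪T₀ (bb + dz), bb⟫ := by
      rw [inner_sub_left, ← LinearMap.adjoint_inner_right, ← huu] at h2v
      rw [← hbb] at h2v
      linarith [h2v]
    -- scalar facts
    have hρ : (0:ℝ) ≤ ⟪r, r⟫ := real_inner_self_nonneg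
    have hU : (0:ℝ) ≤ ⟪uu, uu⟫ := real_inner_self_nonneg
    have hD : (0:ℝ) ≤ ⟪ee, ee⟫ := real_inner_self_nonneg
    have hX2 : (0:ℝ) ≤ ⟪dx, dx⟫ := real_inner_self_nonneg
    have sq1 : (0:ℝ) ≤ 4*⟪uu,uu⟫ - 4*⟪r,uu⟫ + 4*⟪uu,ee⟫ + ⟪r,r⟫ - 2*⟪r,ee⟫ + ⟪ee,ee⟫ := by
      have h : (0:ℝ) ≤ ⟪(2:ℝ) • uu - (r - ee), (2:ℝ) • uu - (r - ee)⟫ := real_inner_self_nonneg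
      simp only [inner_sub_left, inner_sub_right, real_inner_smul_left, real_inner_smul_right] at h
      linarith [real_inner_comm uu r, real_inner_comm uu ee, real_inner_comm r ee]
    have sq3 : (0:ℝ) ≤ ⟪r,r⟫ - 4*⟪r,ee⟫ + 4*⟪ee,ee⟫ := by
      have h : (0:ℝ) ≤ ⟪r - (2:ℝ) • ee, r - (2:ℝ) • ee⟫ := real_inner_self_nonneg
      simp only [inner_sub_left, inner_sub_right, real_inner_smul_left, real_inner_smul_right] at h
      linarith [real_inner_comm r ee]
    have sq2 : (0:ℝ) ≤ β^2*⟪r,r⟫ - 8*β*⟪dx,r⟫ + 16*⟪dx,dx⟫ := by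
      have h : (0:ℝ) ≤ ⟪β • r - (4:ℝ) • dx, β • r - (4:ℝ) • dx⟫ := real_inner_self_nonneg
      simp only [inner_sub_left, inner_sub_right, real_inner_smul_left, real_inner_smul_right] at h
      linarith [h, (show β*⟪r,dx⟫ = β*⟪dx,r⟫ by rw [real_inner_comm])]
    have sqS : (0:ℝ) ≤ ⟪S aa, aa⟫ + 2*⟪S dy, aa⟫ + ⟪S dy, dy⟫ := by
      have h := hSpsd (aa + dy)
      simp only [map_add, inner_add_left, inner_add_right] at h
      linarith [hSsym aa dy, real_inner_comm (S dy) aa]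
    have sqT : (0:ℝ) ≤ ⟪T₀ bb, bb⟫ + 2*⟪T₀ dz, bb⟫ + ⟪T₀ dz, dz⟫ := by
      have h := hTpsd (bb + dz)
      simp only [map_add, inner_add_left, inner_add_right] at h
      linarith [hTsym bb dz, real_inner_comm (T₀ dz) bb]
    have H1 : β*(⟪r,r⟫ - 2*⟪r,uu⟫ + ⟪uu,uu⟫ - ⟪r,ee⟫ + ⟪uu,ee⟫) + ⟪S aa, aa⟫ + ⟪S dy, aa⟫
        ≤ ⟪dx,r⟫ - ⟪dx,uu⟫ := by
      simp only [inner_sub_left, inner_sub_right, inner_add_left, map_add,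
        real_inner_smul_left] at h1s
      linarith [h1s, (show β*⟪uu,r⟫ = β*⟪r,uu⟫ by rw [real_inner_comm uu r]),
        (show β*⟪ee,r⟫ = β*⟪r,ee⟫ by rw [real_inner_comm ee r]),
        (show β*⟪ee,uu⟫ = β*⟪uu,ee⟫ by rw [real_inner_comm ee uu])]
    have H2 : β*⟪r,uu⟫ + ⟪T₀ bb, bb⟫ + ⟪T₀ dz, bb⟫ ≤ ⟪dx,uu⟫ := by
      simp only [inner_sub_left, inner_sub_right, inner_add_left, map_add,
        real_inner_smul_left] at h2s
      linarith [h2s, (show β*⟪uu,r⟫ = β*⟪r,uu⟫ by rw [real_inner_comm uu r]),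
        (show β*⟪r,uu⟫ = β*⟪uu,r⟫ by rw [real_inner_comm r uu])]
    have hfrac := scalar_key β ⟪r,r⟫ ⟪uu,uu⟫ ⟪r,uu⟫ ⟪dx,r⟫ ⟪dx,uu⟫ ⟪r,ee⟫ ⟪uu,ee⟫ ⟪ee,ee⟫
      ⟪dx,dx⟫ ⟪S aa, aa⟫ ⟪S dy, aa⟫ ⟪S dy, dy⟫ ⟪T₀ bb, bb⟫ ⟪T₀ dz, bb⟫ ⟪T₀ dz, dz⟫
      hβ hρ hU hD hX2 (hSpsd aa) (hSpsd dy) (hTpsd bb) (hTpsd dz)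
      sq1 sq3 sq2 sqS sqT H1 H2
    -- conclude
    rw [hH3]
    simp only [← real_inner_self_eq_norm_sq]
    have hfracτ := mul_le_mul_of_nonneg_left hfrac hτ.le
    have cS : τ*⟪S dy, dy⟫ = τ*⟪dy, S dy⟫ := by rw [real_inner_comm]
    have cT : τ*⟪T₀ dz, dz⟫ = τ*⟪dz, T₀ dz⟫ := by rw [real_inner_comm]
    have nY : (0:ℝ) ≤ ⟪dy, SigY dy⟫ := by rw [real_inner_comm]; exact hSigYpsd dy
    have nZ : (0:ℝ) ≤ ⟪dz, SigZ dz⟫ := by rw [real_inner_comm]; exact hSigZpsd dz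
    have nA : (0:ℝ) ≤ ⟪LinearMap.adjoint A dy, LinearMap.adjoint A dy⟫ := real_inner_self_nonneg
    linarith [hfracτ, cS, cT, mul_nonneg hτ.le nY, mul_nonneg hτ.le nZ,
      mul_nonneg (mul_nonneg hτ.le hβ.le) nA]
  -- pass to the infimum
  obtain ⟨w₀, hw₀⟩ := hne
  have hnonempty : Nonempty {w : Y × Z × X // KKT w} := ⟨⟨w₀, hw₀⟩⟩
  have hLnn : 0 ≤ τ * β * ‖r‖ ^ 2 := by positivity
  have hIb : Real.sqrt (τ * β * ‖r‖ ^ 2)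
      ≤ ⨅ w : {w : Y × Z × X // KKT w},
        Real.sqrt (H3sq (w.1.1 - y 0) (w.1.2.1 - z 0) (w.1.2.2 - x 0)) := by
    refine le_ciInf fun w => Real.sqrt_le_sqrt ?_
    exact key w.1 w.2
  have hInn : 0 ≤ ⨅ w : {w : Y × Z × X // KKT w},
      Real.sqrt (H3sq (w.1.1 - y 0) (w.1.2.1 - z 0) (w.1.2.2 - x 0)) :=
    le_trans (Real.sqrt_nonneg _) hIb
  calc (τ * β)⁻¹ * ‖x 1 - x 0‖ ^ 2 = τ * β * ‖r‖ ^ 2 := hL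
    _ = Real.sqrt (τ * β * ‖r‖ ^ 2) ^ 2 := (Real.sq_sqrt hLnn).symm
    _ ≤ _ := by
        apply pow_le_pow_left₀ (Real.sqrt_nonneg _) hIb
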